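/- arXiv:2006.02119 — 3 statements merged into one kernel-verified Lean document; each statement's English description precedes it below -/
import Mathlib

section
/- (Weissman et al. concentration inequality.) Let Q be a probability distribution on the finite set [S] = {1,…,S}, let X₁, X₂, …, Xₙ be independent and identically distributed random variables with distribution Q, and define the empirical distribution Q̂ₙ by Q̂ₙ(s) = (1/n)·Σ_{t=1}^n 1{X_t = s} for each s ∈ [S]. Then for any δ > 0, P( ‖Q̂ₙ − Q‖₁ ≥ √(2S·log(2/δ)/n) ) ≤ δ. -/
open MeasureTheory ProbabilityTheory Finset
open scoped ENNReal

section Hoeffding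
open Real

private lemma g_pos (p : ℝ) (hp0 : 0 ≤ p) (hp1 : p ≤ 1) (t : ℝ) :
    0 < p * exp t + (1 - p) * exp (-t) := by
  rcases eq_or_lt_of_le hp0 with h | h
  · rw [← h]; simp [exp_pos]
  · have h1 : 0 < p * exp t := mul_pos h (exp_pos t)
    have h2 : 0 ≤ (1 - p) * exp (-t) := mul_nonneg (by linarith) (exp_pos _).le
    linarith

/-- Hoeffding's lemma, two-point case, for `t ≥ 0`. -/
private lemma hoeff_log_half (p : ℝ) (hp0 : 0 ≤ p) (hp1 : p ≤ 1) (t : ℝ) (ht : 0 ≤ t) :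
    Real.log (p * exp t + (1 - p) * exp (-t)) ≤ (2 * p - 1) * t + t ^ 2 / 2 := by
  set q := 1 - p with hq
  -- g, g' and φ = g'/g
  set g : ℝ → ℝ := fun t => p * exp t + q * exp (-t) with hgdef
  set g' : ℝ → ℝ := fun t => p * exp t - q * exp (-t) with hg'def
  have hgpos : ∀ t, 0 < g t := fun t => g_pos p hp0 hp1 t
  have hgder : ∀ t, HasDerivAt g (g' t) t := by
    intro t
    have h1 : HasDerivAt (fun t => p * exp t) (p * exp t) t :=
      (Real.hasDerivAt_exp t).const_mul p
    have h2 : HasDerivAt (fun t => q * exp (-t)) (q * (exp (-t) * (-1))) t :=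
      (((Real.hasDerivAt_exp (-t)).comp t ((hasDerivAt_id t).neg))).const_mul q
    have := h1.add h2
    simpa [hg'def, hgdef, Pi.add_def, mul_comm, sub_eq_add_neg, mul_assoc] using this
  set φ : ℝ → ℝ := fun t => g' t / g t with hφdef
  have hφder : ∀ t, HasDerivAt φ (1 - φ t ^ 2) t := by
    intro t
    have h1 : HasDerivAt g' (g t) t := by
      have h1 : HasDerivAt (fun t => p * exp t) (p * exp t) t :=
        (Real.hasDerivAt_exp t).const_mul p
      have h2 : HasDerivAt (fun t => q * exp (-t)) (q * (exp (-t) * (-1))) t :=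
        (((Real.hasDerivAt_exp (-t)).comp t ((hasDerivAt_id t).neg))).const_mul q
      have := h1.sub h2
      simpa [hgdef, hg'def, Pi.add_def, Pi.neg_def, mul_comm, sub_eq_add_neg, mul_assoc] using this
    have := h1.div (hgder t) (hgpos t).ne'
    have key : ∀ a b : ℝ, a ≠ 0 → (a * a - b * b) / a ^ 2 = 1 - (b / a) ^ 2 := by
      intro a b ha; field_simp
    have heq : (g t * g t - g' t * g' t) / g t ^ 2 = 1 - φ t ^ 2 := by
      simp only [hφdef]; exact key _ _ (hgpos t).ne'
    rw [heq] at this; exact this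
  -- D = h' is monotone
  set D : ℝ → ℝ := fun t => t + (2 * p - 1) - φ t with hDdef
  have hDder : ∀ t, HasDerivAt D (φ t ^ 2) t := by
    intro t
    have := ((hasDerivAt_id t).add_const (2 * p - 1)).sub (hφder t)
    simpa [hDdef, Pi.sub_def] using this
  have hDmono : Monotone D :=
    monotone_of_hasDerivAt_nonneg hDder (fun t => sq_nonneg _)
  have hD0 : D 0 = 0 := by
    have h1 : g 0 = 1 := by simp [hgdef, hq]
    have h2 : g' 0 = 2 * p - 1 := by simp [hg'def, hq]; ring
    simp [hDdef, hφdef, h1, h2]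
  have hDnonneg : ∀ t, 0 ≤ t → 0 ≤ D t := fun t ht => hD0 ▸ hDmono ht
  -- h = t²/2 + m t − log g is monotone on [0, ∞)
  set h : ℝ → ℝ := fun t => t ^ 2 / 2 + (2 * p - 1) * t - Real.log (g t) with hhdef
  have hhder : ∀ t, HasDerivAt h (D t) t := by
    intro t
    have h1 : HasDerivAt (fun t : ℝ => t ^ 2 / 2 + (2 * p - 1) * t)
        (t + (2 * p - 1)) t := by
      have := ((hasDerivAt_pow 2 t).div_const 2).add ((hasDerivAt_id t).const_mul (2 * p - 1))
      simpa [mul_comm, Pi.add_def] using this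
    have h2 : HasDerivAt (fun t => Real.log (g t)) (g' t / g t) t :=
      (hgder t).log (hgpos t).ne'
    have := h1.sub h2
    simpa [hhdef, hDdef, hφdef, Pi.sub_def] using this
  have hhmono : MonotoneOn h (Set.Ici 0) := by
    apply monotoneOn_of_hasDerivWithinAt_nonneg (convex_Ici 0)
      (fun x _ => (hhder x).continuousAt.continuousWithinAt)
      (fun x hx => (hhder x).hasDerivWithinAt)
    intro x hx
    rw [interior_Ici] at hx
    exact hDnonneg x (le_of_lt hx)
  have hh0 : h 0 = 0 := by
    simp [hhdef, hgdef, hq]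
  have := hhmono (Set.self_mem_Ici) (Set.mem_Ici.2 ht) ht
  rw [hh0] at this
  simp only [hhdef] at this
  linarith


private lemma hoeff_two_point (p : ℝ) (hp0 : 0 ≤ p) (hp1 : p ≤ 1) (t : ℝ) :
    p * exp t + (1 - p) * exp (-t) ≤ exp ((2 * p - 1) * t + t ^ 2 / 2) := by
  have key : Real.log (p * exp t + (1 - p) * exp (-t)) ≤ (2 * p - 1) * t + t ^ 2 / 2 := by
    rcases le_or_gt 0 t with ht | ht
    · exact hoeff_log_half p hp0 hp1 t ht
    · have h := hoeff_log_half (1 - p) (by linarith) (by linarith) (-t) (by linarith)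
      rw [sub_sub_cancel, neg_neg] at h
      have e1 : (1 - p) * exp (-t) + p * exp t = p * exp t + (1 - p) * exp (-t) := by ring
      have e2 : (2 * (1 - p) - 1) * (-t) + (-t) ^ 2 / 2 = (2 * p - 1) * t + t ^ 2 / 2 := by ring
      rw [e1, e2] at h
      exact h
  calc p * exp t + (1 - p) * exp (-t)
      = exp (Real.log (p * exp t + (1 - p) * exp (-t))) :=
        (Real.exp_log (g_pos p hp0 hp1 t)).symm
    _ ≤ exp ((2 * p - 1) * t + t ^ 2 / 2) := exp_le_exp.2 key

private lemma weighted_mgf {S : ℕ} (w : Fin S → ℝ) (hw0 : ∀ x, 0 ≤ w x)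
    (hw1 : ∑ x, w x = 1) (f : Fin S → ℝ) (hf : ∀ x, f x = 1 ∨ f x = -1) (t : ℝ) :
    ∑ x, w x * exp (t * f x) ≤ exp (t * (∑ x, w x * f x) + t ^ 2 / 2) := by
  classical
  set p := ∑ x ∈ Finset.univ.filter (fun x => f x = 1), w x with hp
  have hsplit := Finset.sum_filter_add_sum_filter_not Finset.univ (fun x => f x = 1) w
  rw [hw1] at hsplit
  have hp0 : 0 ≤ p := Finset.sum_nonneg fun x _ => hw0 x
  have hp1 : p ≤ 1 := by
    have : 0 ≤ ∑ x ∈ Finset.univ.filter (fun x => ¬ f x = 1), w x :=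
      Finset.sum_nonneg fun x _ => hw0 x
    linarith
  have hcompl : ∑ x ∈ Finset.univ.filter (fun x => ¬ f x = 1), w x = 1 - p := by linarith
  have h1 : ∑ x, w x * exp (t * f x) = p * exp t + (1 - p) * exp (-t) := by
    rw [← Finset.sum_filter_add_sum_filter_not Finset.univ (fun x => f x = 1)
      (fun x => w x * exp (t * f x))]
    congr 1
    · rw [hp, Finset.sum_mul]
      apply Finset.sum_congr rfl
      intro x hx
      rw [Finset.mem_filter] at hx
      rw [hx.2, mul_one]
    · rw [← hcompl, Finset.sum_mul]
      apply Finset.sum_congr rfl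
      intro x hx
      rw [Finset.mem_filter] at hx
      rcases hf x with h | h
      · exact absurd h hx.2
      · rw [h]
        norm_num
  have h2 : ∑ x, w x * f x = 2 * p - 1 := by
    rw [← Finset.sum_filter_add_sum_filter_not Finset.univ (fun x => f x = 1)
      (fun x => w x * f x)]
    have e1 : ∑ x ∈ Finset.univ.filter (fun x => f x = 1), w x * f x = p := by
      rw [hp]
      apply Finset.sum_congr rfl
      intro x hx
      rw [Finset.mem_filter] at hx
      rw [hx.2, mul_one]
    have e2 : ∑ x ∈ Finset.univ.filter (fun x => ¬ f x = 1), w x * f x = -(1 - p) := by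
      rw [← hcompl, ← Finset.sum_neg_distrib]
      apply Finset.sum_congr rfl
      intro x hx
      rw [Finset.mem_filter] at hx
      rcases hf x with h | h
      · exact absurd h hx.2
      · rw [h]; ring
    rw [e1, e2]
    ring
  rw [h1, h2, mul_comm t (2 * p - 1)]
  exact hoeff_two_point p hp0 hp1 t

end Hoeffding

/-- **Weissman et al. concentration inequality.**  Let `Q` be a probability distribution
on `[S]`, let `X₁, …, Xₙ` be i.i.d. with law `Q`, and let `Q̂ₙ` be the empirical
distribution `Q̂ₙ(s) = (1/n)·Σ_{t} 1{X_t = s}`.  Then for any `δ > 0`,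
`P(‖Q̂ₙ − Q‖₁ ≥ √(2S log(2/δ)/n)) ≤ δ`. -/



theorem weissman_l1_concentration
    (S n : ℕ) (hS : 1 ≤ S) (hn : 1 ≤ n)
    (Ω : Type) [MeasurableSpace Ω] (μ : Measure Ω) [IsProbabilityMeasure μ]
    (Q : Measure (Fin S)) [IsProbabilityMeasure Q]
    (X : Fin n → Ω → Fin S)
    (hmeas : ∀ i, Measurable (X i))
    (hindep : iIndepFun X μ)
    (hdist : ∀ i, μ.map (X i) = Q)
    (δ : ℝ) (hδ : 0 < δ) :
    μ {ω | Real.sqrt (2 * S * Real.log (2 / δ) / n) ≤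
        ∑ s : Fin S,
          |(∑ i : Fin n, if X i ω = s then (1 : ℝ) else 0) / n - (Q {s}).toReal|} ≤
      ENNReal.ofReal δ := by
  classical
  rcases le_or_gt 1 δ with hδ1 | hδ1
  · calc μ _ ≤ μ Set.univ := measure_mono (Set.subset_univ _)
      _ = 1 := measure_univ
      _ ≤ ENNReal.ofReal δ := by
          rw [← ENNReal.ofReal_one]; exact ENNReal.ofReal_le_ofReal hδ1
  set ε : ℝ := Real.sqrt (2 * S * Real.log (2 / δ) / n) with hεdef
  have hε0 : 0 ≤ ε := Real.sqrt_nonneg _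
  have hlog : 0 ≤ Real.log (2 / δ) := Real.log_nonneg (by rw [le_div_iff₀ hδ]; linarith)
  have hn0 : (0:ℝ) < n := by exact_mod_cast Nat.lt_of_lt_of_le Nat.zero_lt_one hn
  have hε2 : ε ^ 2 = 2 * S * Real.log (2 / δ) / n := by
    rw [hεdef, Real.sq_sqrt]
    positivity
  set w : Fin S → ℝ := fun s => (Q {s}).toReal with hwdef
  have hw0 : ∀ s, 0 ≤ w s := fun s => ENNReal.toReal_nonneg
  have hw1 : ∑ s, w s = 1 := by
    have h := integral_fintype (μ := Q) (f := fun _ => (1:ℝ)) (integrable_const 1)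
    simpa [hwdef, Measure.real] using h.symm
  -- Chernoff bound for a fixed sign pattern
  have key : ∀ f : Fin S → ℝ, (∀ s, f s = 1 ∨ f s = -1) →
      μ {ω | ε ≤ ∑ s, f s * ((∑ i, if X i ω = s then (1:ℝ) else 0) / n - w s)}
        ≤ ENNReal.ofReal (Real.exp (-(n * ε ^ 2) / 2)) := by
    intro f hf
    set m : ℝ := ∑ s, w s * f s with hm
    set Y : Fin n → Ω → ℝ := fun i ω => f (X i ω) with hY
    have hYmeas : ∀ i, Measurable (Y i) := fun i => (measurable_of_finite f).comp (hmeas i)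
    have hYindep : iIndepFun Y μ :=
      hindep.comp (fun _ => f) (fun _ => measurable_of_finite f)
    -- rewrite the event
    have hev : {ω | ε ≤ ∑ s, f s * ((∑ i, if X i ω = s then (1:ℝ) else 0) / n - w s)}
        = {ω | (n:ℝ) * (ε + m) ≤ (∑ i, Y i) ω} := by
      ext ω
      simp only [Set.mem_setOf_eq, Finset.sum_apply]
      have hsum : ∑ s, f s * ((∑ i, if X i ω = s then (1:ℝ) else 0) / n - w s)
          = (∑ i, Y i ω) / n - m := by
        simp_rw [mul_sub]
        rw [Finset.sum_sub_distrib]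
        congr 1
        · simp_rw [← mul_div_assoc]
          rw [← Finset.sum_div]
          congr 1
          simp_rw [Finset.mul_sum, mul_ite, mul_one, mul_zero]
          rw [Finset.sum_comm]
          exact Finset.sum_congr rfl fun i _ => by simp [hY]
        · rw [hm]
          exact Finset.sum_congr rfl fun s _ => mul_comm _ _
      rw [hsum, le_sub_iff_add_le, le_div_iff₀ hn0, mul_comm]
    -- integrability
    have hint : ∀ i, Integrable (fun ω => Real.exp (ε * Y i ω)) μ := by
      intro i
      refine ⟨(((hYmeas i).const_mul ε).exp).aestronglyMeasurable, ?_⟩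
      apply MeasureTheory.HasFiniteIntegral.of_bounded (C := Real.exp |ε|)
      filter_upwards with ω
      rw [Real.norm_eq_abs, Real.abs_exp]
      apply Real.exp_le_exp.2
      rcases hf (X i ω) with h | h <;> simp only [hY, h]
      · simpa using le_abs_self ε
      · simpa using neg_le_abs ε
    -- mgf of each coordinate
    have hmgf_i : ∀ i : Fin n, mgf (Y i) μ ε ≤ Real.exp (ε * m + ε ^ 2 / 2) := by
      intro i
      have h1 : mgf (Y i) μ ε = ∫ x, Real.exp (ε * f x) ∂Q := by
        rw [mgf, ← hdist i, integral_map (hmeas i).aemeasurable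
          (measurable_of_finite (fun x => Real.exp (ε * f x))).aestronglyMeasurable]
      rw [h1, integral_fintype (Integrable.of_finite)]
      simp only [smul_eq_mul]
      have h2 := weighted_mgf w hw0 hw1 f hf ε
      rw [← hm] at h2
      exact h2
    -- Chernoff bound
    have hintsum : Integrable (fun ω => Real.exp (ε * (∑ i, Y i) ω)) μ :=
      hYindep.integrable_exp_mul_sum hYmeas (fun i _ => hint i)
    have hchern := measure_ge_le_exp_mul_mgf (μ := μ) (X := ∑ i, Y i)
      ((n:ℝ) * (ε + m)) hε0 hintsum
    rw [hYindep.mgf_sum hYmeas] at hchern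
    have hprod : ∏ i : Fin n, mgf (Y i) μ ε ≤ Real.exp ((n:ℝ) * (ε * m + ε ^ 2 / 2)) := by
      calc ∏ i : Fin n, mgf (Y i) μ ε ≤ ∏ _i : Fin n, Real.exp (ε * m + ε ^ 2 / 2) :=
            Finset.prod_le_prod (fun i _ => mgf_nonneg) (fun i _ => hmgf_i i)
        _ = Real.exp ((n:ℝ) * (ε * m + ε ^ 2 / 2)) := by
            rw [Finset.prod_const, ← Real.exp_nat_mul]
            simp
    have hfinal : (μ {ω | (n:ℝ) * (ε + m) ≤ (∑ i, Y i) ω}).toReal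
        ≤ Real.exp (-(n * ε ^ 2) / 2) := by
      calc (μ {ω | (n:ℝ) * (ε + m) ≤ (∑ i, Y i) ω}).toReal
          ≤ Real.exp (-ε * ((n:ℝ) * (ε + m))) * (∏ i : Fin n, mgf (Y i) μ ε) := hchern
        _ ≤ Real.exp (-ε * ((n:ℝ) * (ε + m))) * Real.exp ((n:ℝ) * (ε * m + ε ^ 2 / 2)) := by
            apply mul_le_mul_of_nonneg_left hprod (Real.exp_pos _).le
        _ = Real.exp (-(n * ε ^ 2) / 2) := by
            rw [← Real.exp_add]
            congr 1
            ring
    rw [hev]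
    calc μ {ω | (n:ℝ) * (ε + m) ≤ (∑ i, Y i) ω}
        = ENNReal.ofReal ((μ {ω | (n:ℝ) * (ε + m) ≤ (∑ i, Y i) ω}).toReal) :=
          (ENNReal.ofReal_toReal (measure_ne_top _ _)).symm
      _ ≤ ENNReal.ofReal (Real.exp (-(n * ε ^ 2) / 2)) := ENNReal.ofReal_le_ofReal hfinal
  -- union bound over sign patterns
  set E : (Fin S → Bool) → Set Ω := fun σ =>
    {ω | ε ≤ ∑ s, (if σ s then (1:ℝ) else -1) *
      ((∑ i, if X i ω = s then (1:ℝ) else 0) / n - w s)} with hE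
  have hsub : {ω | ε ≤ ∑ s : Fin S,
      |(∑ i : Fin n, if X i ω = s then (1 : ℝ) else 0) / n - (Q {s}).toReal|}
      ⊆ ⋃ σ : Fin S → Bool, E σ := by
    intro ω hω
    simp only [Set.mem_setOf_eq] at hω
    refine Set.mem_iUnion.2 ⟨fun s =>
      if 0 ≤ (∑ i, if X i ω = s then (1:ℝ) else 0) / n - w s then true else false, ?_⟩
    simp only [hE, Set.mem_setOf_eq]
    have : ∀ s : Fin S,
        (if (if 0 ≤ (∑ i, if X i ω = s then (1:ℝ) else 0) / n - w s then true else false)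
          then (1:ℝ) else -1) * ((∑ i, if X i ω = s then (1:ℝ) else 0) / n - w s)
        = |(∑ i, if X i ω = s then (1:ℝ) else 0) / n - w s| := by
      intro s
      by_cases h : 0 ≤ (∑ i, if X i ω = s then (1:ℝ) else 0) / n - w s
      · rw [if_pos h, if_pos rfl, one_mul, abs_of_nonneg h]
      · rw [if_neg h, if_neg (by simp), neg_one_mul, abs_of_neg (lt_of_not_ge h)]
    rw [Finset.sum_congr rfl (fun s _ => this s)]
    exact hω
  have hunion : μ {ω | ε ≤ ∑ s : Fin S,
      |(∑ i : Fin n, if X i ω = s then (1 : ℝ) else 0) / n - (Q {s}).toReal|}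
      ≤ (2:ℝ≥0∞) ^ S * ENNReal.ofReal (Real.exp (-(n * ε ^ 2) / 2)) := by
    calc μ _ ≤ μ (⋃ σ : Fin S → Bool, E σ) := measure_mono hsub
      _ ≤ ∑' σ : Fin S → Bool, μ (E σ) := measure_iUnion_le E
      _ = ∑ σ : Fin S → Bool, μ (E σ) := tsum_fintype _
      _ ≤ ∑ _σ : Fin S → Bool, ENNReal.ofReal (Real.exp (-(n * ε ^ 2) / 2)) :=
          Finset.sum_le_sum (fun σ _ => key _ (fun s => by by_cases h : σ s <;> simp [h]))
      _ = (Fintype.card (Fin S → Bool) : ℝ≥0∞) * ENNReal.ofReal (Real.exp (-(n * ε ^ 2) / 2)) := by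
          rw [Finset.sum_const, Finset.card_univ, nsmul_eq_mul]
      _ = (2:ℝ≥0∞) ^ S * ENNReal.ofReal (Real.exp (-(n * ε ^ 2) / 2)) := by
          norm_num [Fintype.card_fun]
  refine hunion.trans ?_
  -- final arithmetic
  have hexp : Real.exp (-(n * ε ^ 2) / 2) = (δ / 2) ^ S := by
    have h1 : (n:ℝ) * ε ^ 2 / 2 = S * Real.log (2 / δ) := by
      rw [hε2]
      field_simp
    rw [neg_div, h1, Real.exp_neg, Real.exp_nat_mul, Real.exp_log (by positivity)]
    rw [← inv_pow, inv_div]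
  rw [hexp]
  have h2S : (2:ℝ≥0∞) ^ S = ENNReal.ofReal ((2:ℝ) ^ S) := by
    rw [ENNReal.ofReal_pow (by norm_num)]
    norm_num
  rw [h2S, ← ENNReal.ofReal_mul (by positivity)]
  apply ENNReal.ofReal_le_ofReal
  have : (2:ℝ) ^ S * (δ / 2) ^ S = δ ^ S := by
    rw [← mul_pow]
    congr 1
    field_simp
  rw [this]
  calc δ ^ S ≤ δ ^ 1 := pow_le_pow_of_le_one hδ.le hδ1.le hS
    _ = δ := pow_one δ
end

section
/- Let K ≥ 1 and W ≥ 1 be integers and let a₁, a₂, …, a_W be any sequence taking values in a set of size K. For each t ∈ [W] define N_t = max{1, #{u < t : a_u = a_t}}, the number of previous occurrences of the value a_t (floored at 1). Then Σ_{t=1}^W 1/√(N_t) ≤ 2·√(K·(W+1)). -/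
open Finset

private lemma inv_sqrt_step (m : ℕ) :
    1 / Real.sqrt (m + 1) ≤ 2 * (Real.sqrt (m + 1) - Real.sqrt m) := by
  have h1 : Real.sqrt m ≤ Real.sqrt (m + 1) := by
    apply Real.sqrt_le_sqrt; push_cast; linarith
  have h2 : (0:ℝ) ≤ Real.sqrt m := Real.sqrt_nonneg _
  have h4 : Real.sqrt (m + 1) ^ 2 = m + 1 := Real.sq_sqrt (by positivity)
  have h5 : Real.sqrt m ^ 2 = m := Real.sq_sqrt (by positivity)
  have hpos : 0 < Real.sqrt (m + 1) := Real.sqrt_pos.mpr (by positivity)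
  rw [div_le_iff₀ hpos]
  nlinarith [sq_nonneg (Real.sqrt (m+1) - Real.sqrt m)]

private lemma sum_inv_sqrt_succ (m : ℕ) (hm : 1 ≤ m) :
    ∑ j ∈ Finset.range m, 1 / Real.sqrt (j + 1) ≤ 2 * Real.sqrt m - 1 := by
  induction m, hm using Nat.le_induction with
  | base => norm_num
  | succ m hm ih =>
      rw [Finset.sum_range_succ]
      have := inv_sqrt_step m
      push_cast
      push_cast at ih this
      linarith

/-- `∑_{j < n} 1/√(max 1 j) ≤ 2√n`. -/
private lemma sum_f_le (n : ℕ) :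
    ∑ j ∈ Finset.range n, 1 / Real.sqrt (max 1 (j : ℝ)) ≤ 2 * Real.sqrt n := by
  match n with
  | 0 => simp
  | 1 => norm_num
  | (m + 2) =>
      have key : ∑ j ∈ Finset.range (m + 2), 1 / Real.sqrt (max 1 (j : ℝ))
          = (∑ j ∈ Finset.range (m + 1), 1 / Real.sqrt ((j : ℝ) + 1)) + 1 := by
        rw [Finset.sum_range_succ' (fun j => 1 / Real.sqrt (max 1 (j : ℝ)))]
        congr 1
        · apply Finset.sum_congr rfl
          intro j _
          show 1 / Real.sqrt (max 1 (((j + 1 : ℕ)) : ℝ)) = 1 / Real.sqrt ((j : ℝ) + 1)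
          congr 1
          congr 1
          push_cast
          exact max_eq_right (by linarith [Nat.cast_nonneg (α := ℝ) j])
        · show 1 / Real.sqrt (max 1 (((0 : ℕ)) : ℝ)) = 1
          norm_num
      rw [key]
      have h1 := sum_inv_sqrt_succ (m + 1) (by omega)
      have h2 : Real.sqrt (m + 1) ≤ Real.sqrt (m + 2) := by
        apply Real.sqrt_le_sqrt; push_cast; linarith
      push_cast at h1 h2 ⊢
      linarith

/-- **Windowed-count summation bound (Eq. (8) of the paper).**  Let `a₁, …, a_W` take
values in a set of size `K`, and for `t ∈ [W]` let
`N_t = max{1, #{u < t : a_u = a_t}}` be the number of previous occurrences of `a_t`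
(floored at `1`).  Then `Σ_{t=1}^W 1/√N_t ≤ 2√(K(W+1))`. -/
theorem sum_inv_sqrt_window_counts (K W : ℕ) (hK : 1 ≤ K) (hW : 1 ≤ W)
    (a : ℕ → Fin K) :
    ∑ t ∈ Finset.Icc 1 W,
        (1 : ℝ) /
          Real.sqrt (max 1 (((Finset.Icc 1 (t - 1)).filter fun u => a u = a t).card)) ≤
      2 * Real.sqrt ((K : ℝ) * ((W : ℝ) + 1)) := by
  set c : ℕ → ℕ := fun t => ((Finset.Icc 1 (t - 1)).filter fun u => a u = a t).card with hc
  set f : ℕ → ℝ := fun j => 1 / Real.sqrt (max 1 (j : ℝ)) with hf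
  have hgoal : ∑ t ∈ Finset.Icc 1 W,
      (1 : ℝ) / Real.sqrt (max 1 ((c t : ℝ))) = ∑ t ∈ Finset.Icc 1 W, f (c t) := rfl
  have hsplit : ∑ t ∈ Finset.Icc 1 W, f (c t)
      = ∑ k : Fin K, ∑ t ∈ (Finset.Icc 1 W).filter (fun t => a t = k), f (c t) :=
    (Finset.sum_fiberwise_of_maps_to (fun t _ => Finset.mem_univ (a t)) _).symm
  have hmono : ∀ k : Fin K, ∀ t ∈ (Finset.Icc 1 W).filter (fun t => a t = k),
      ∀ t' ∈ (Finset.Icc 1 W).filter (fun t => a t = k), t < t' → c t + 1 ≤ c t' := by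
    intro k t ht t' ht' hltt
    simp only [Finset.mem_filter, Finset.mem_Icc] at ht ht'
    have hsub : insert t ((Finset.Icc 1 (t - 1)).filter fun u => a u = a t)
        ⊆ (Finset.Icc 1 (t' - 1)).filter fun u => a u = a t' := by
      intro u hu
      rcases Finset.mem_insert.mp hu with rfl | hu
      · refine Finset.mem_filter.mpr ⟨Finset.mem_Icc.mpr ⟨ht.1.1, by omega⟩, ?_⟩
        rw [ht.2, ht'.2]
      · rcases Finset.mem_filter.mp hu with ⟨hu1, hu2⟩
        rcases Finset.mem_Icc.mp hu1 with ⟨hu3, hu4⟩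
        refine Finset.mem_filter.mpr ⟨Finset.mem_Icc.mpr ⟨hu3, by omega⟩, ?_⟩
        rw [hu2, ht.2, ht'.2]
    have hnot : t ∉ ((Finset.Icc 1 (t - 1)).filter fun u => a u = a t) := by
      intro h
      rcases Finset.mem_Icc.mp (Finset.mem_filter.mp h).1 with ⟨h1, h2⟩
      omega
    have h3 := Finset.card_le_card hsub
    rw [Finset.card_insert_of_notMem hnot] at h3
    simp only [hc]
    exact h3
  have hlt : ∀ k : Fin K, ∀ t ∈ (Finset.Icc 1 W).filter (fun t => a t = k),
      c t < ((Finset.Icc 1 W).filter (fun t => a t = k)).card := by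
    intro k t ht
    have ht' := ht
    simp only [Finset.mem_filter, Finset.mem_Icc] at ht'
    have hsub : insert t ((Finset.Icc 1 (t - 1)).filter fun u => a u = a t)
        ⊆ (Finset.Icc 1 W).filter (fun t => a t = k) := by
      intro u hu
      rcases Finset.mem_insert.mp hu with rfl | hu
      · exact ht
      · rcases Finset.mem_filter.mp hu with ⟨hu1, hu2⟩
        rcases Finset.mem_Icc.mp hu1 with ⟨hu3, hu4⟩
        refine Finset.mem_filter.mpr ⟨Finset.mem_Icc.mpr ⟨hu3, by omega⟩, ?_⟩
        rw [hu2, ht'.2]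
    have hnot : t ∉ ((Finset.Icc 1 (t - 1)).filter fun u => a u = a t) := by
      intro h
      rcases Finset.mem_Icc.mp (Finset.mem_filter.mp h).1 with ⟨h1, h2⟩
      omega
    have h3 := Finset.card_le_card hsub
    rw [Finset.card_insert_of_notMem hnot] at h3
    simp only [hc]
    omega
  have hfiber : ∀ k : Fin K,
      ∑ t ∈ (Finset.Icc 1 W).filter (fun t => a t = k), f (c t)
        ≤ 2 * Real.sqrt (((Finset.Icc 1 W).filter (fun t => a t = k)).card) := by
    intro k
    set T := (Finset.Icc 1 W).filter (fun t => a t = k) with hT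
    have hinj : ∀ t ∈ T, ∀ t' ∈ T, c t = c t' → t = t' := by
      intro t ht t' ht' h
      by_contra hne
      rcases lt_or_gt_of_ne hne with h1 | h1
      · have := hmono k t ht t' ht' h1; omega
      · have := hmono k t' ht' t ht h1; omega
    calc ∑ t ∈ T, f (c t) = ∑ j ∈ T.image c, f j := (Finset.sum_image hinj).symm
      _ ≤ ∑ j ∈ Finset.range T.card, f j := by
          apply Finset.sum_le_sum_of_subset_of_nonneg
          · intro j hj
            rcases Finset.mem_image.mp hj with ⟨t, ht, rfl⟩
            exact Finset.mem_range.mpr (hlt k t ht)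
          · intro j _ _
            positivity
      _ ≤ 2 * Real.sqrt T.card := sum_f_le T.card
  have hcard : ∑ k : Fin K, (((Finset.Icc 1 W).filter (fun t => a t = k)).card : ℝ) = W := by
    have h1 := Finset.card_eq_sum_card_fiberwise (f := a) (s := Finset.Icc 1 W)
      (t := Finset.univ) (fun t _ => Finset.mem_univ (a t))
    rw [Nat.card_Icc] at h1
    have h2 : W = ∑ k : Fin K, ((Finset.Icc 1 W).filter (fun t => a t = k)).card := by
      omega
    exact_mod_cast h2.symm
  have hcs : ∑ k : Fin K, Real.sqrt (((Finset.Icc 1 W).filter (fun t => a t = k)).card)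
      ≤ Real.sqrt ((K : ℝ) * W) := by
    have hsq := sq_sum_le_card_mul_sum_sq
      (s := (Finset.univ : Finset (Fin K)))
      (f := fun k => Real.sqrt (((Finset.Icc 1 W).filter (fun t => a t = k)).card))
    have hsum2 : ∑ k : Fin K,
        Real.sqrt (((Finset.Icc 1 W).filter (fun t => a t = k)).card) ^ 2 = (W : ℝ) := by
      rw [← hcard]
      apply Finset.sum_congr rfl
      intro k _
      exact Real.sq_sqrt (by positivity)
    rw [hsum2, Finset.card_univ, Fintype.card_fin] at hsq
    have hnn : 0 ≤ ∑ k : Fin K,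
        Real.sqrt (((Finset.Icc 1 W).filter (fun t => a t = k)).card) :=
      Finset.sum_nonneg fun k _ => Real.sqrt_nonneg _
    nlinarith [Real.sq_sqrt (show (0:ℝ) ≤ (K:ℝ) * W by positivity),
      Real.sqrt_nonneg ((K:ℝ) * W)]
  calc ∑ t ∈ Finset.Icc 1 W, f (c t)
      = ∑ k : Fin K, ∑ t ∈ (Finset.Icc 1 W).filter (fun t => a t = k), f (c t) := hsplit
    _ ≤ ∑ k : Fin K,
        2 * Real.sqrt (((Finset.Icc 1 W).filter (fun t => a t = k)).card) :=
        Finset.sum_le_sum fun k _ => hfiber k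
    _ = 2 * ∑ k : Fin K,
        Real.sqrt (((Finset.Icc 1 W).filter (fun t => a t = k)).card) := by
        rw [Finset.mul_sum]
    _ ≤ 2 * Real.sqrt ((K : ℝ) * W) := by linarith
    _ ≤ 2 * Real.sqrt ((K : ℝ) * ((W : ℝ) + 1)) := by
        have h5 : Real.sqrt ((K : ℝ) * W) ≤ Real.sqrt ((K : ℝ) * ((W : ℝ) + 1)) := by
          apply Real.sqrt_le_sqrt
          have : (1:ℝ) ≤ K := by exact_mod_cast hK
          nlinarith
        linarith
end

section
/- Consider an NSD bandit problem run with NSD-UCRL2 with window W and confidence δ ∈ (0,1). Fix ε > 0 and 0 < Δ < ε, and fix a round t ∈ [T]. Suppose that at round t: (i) θ_s ≤ U_t(s) for all s ∈ [S]; (ii) ‖p̃_t(A_t) − p_t(·|A_t)‖₁ ≤ 2·√(C_{W,T,δ}/N^W_t(A_t)) and p_t(·|a*_t) lies in the constraint set { q ∈ Δ_S : ‖p̂_t(a*_t) − q‖₁ ≤ √(C_{W,T,δ}/N^W_t(a*_t)) }; (iii) the action A_t chosen by the algorithm is ε-bad at round t; and (iv) |U_t(s) − θ_s| ≤ Δ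 for every s ∈ [S] with p_t(s|A_t) > 0. Then N^W_t(A_t) ≤ C_{W,T,δ}/(ε − Δ)². -/
open MeasureTheory ProbabilityTheory Finset

noncomputable section

/-- `C_{T,δ} = 2 log(2TS/δ)`. -/
def CTdelta (T S : ℕ) (δ : ℝ) : ℝ := 2 * Real.log (2 * T * S / δ)

/-- `C_{W,T,δ} = 2 S log(KWT/δ)`. -/
def CWdelta (K W T S : ℕ) (δ : ℝ) : ℝ := 2 * S * Real.log (K * W * T / δ)

/-- A stochastic-process model of a non-stationary delayed (NSD) bandit problem with
horizon `T`, `K ≥ 2` actions, `S ≥ 2` intermediate outcomes and constant delay `D > 0`.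
Rounds are indexed by `t ∈ {1, …, T}`.  `F t` is the information available to the learner
at the beginning of round `t` (past actions, past signals, and rewards already revealed),
together with the action `A t` chosen at round `t`. -/
structure NSDSetup (T K S D : ℕ) (Ω : Type) [MeasurableSpace Ω] (μ : Measure Ω) where
  hK : 2 ≤ K
  hS : 2 ≤ S
  hD : 1 ≤ D
  /-- information σ-algebra at round `t` (including the chosen action `A t`) -/
  F : ℕ → MeasurableSpace Ω
  F_le : ∀ t, F t ≤ ‹MeasurableSpace Ω›
  F_mono : Monotone F
  /-- action played at round `t` -/
  A : ℕ → Ω → Fin K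
  /-- intermediate signal observed (without delay) at round `t` -/
  Sig : ℕ → Ω → Fin S
  /-- reward generated at round `t` (revealed only at round `t + D`), with values in `[0,1]` -/
  R : ℕ → Ω → ℝ
  /-- transition probabilities: `p t a s` is `p_t(s|a)` -/
  p : ℕ → Fin K → Fin S → ℝ
  /-- fixed mean rewards of the signals -/
  θ : Fin S → ℝ
  p_mem : ∀ t a, p t a ∈ stdSimplex ℝ (Fin S)
  θ_mem : ∀ s, θ s ∈ Set.Icc (0 : ℝ) 1
  R_mem : ∀ t ω, R t ω ∈ Set.Icc (0 : ℝ) 1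
  A_meas : ∀ t, Measurable[F t] (A t)
  Sig_meas : ∀ t, Measurable (Sig t)
  R_meas : ∀ t, Measurable (R t)
  /-- past actions are part of the available information -/
  histA_meas : ∀ u t, u < t → Measurable[F t] (A u)
  /-- past signals are observed without delay -/
  histSig_meas : ∀ u t, u < t → Measurable[F t] (Sig u)
  /-- the reward of round `u` is revealed (only) `D` rounds later -/
  histR_meas : ∀ u t, u + D < t → Measurable[F t] (R u)
  /-- the signal of round `t` is drawn from `p t (A t)`, conditionally on the past -/
  sig_dist : ∀ t s,
    (μ[(fun ω => if Sig t ω = s then (1 : ℝ) else 0) | F t]) =ᵐ[μ]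
      fun ω => p t (A t ω) s
  /-- given the past and the signal `Sig t`, the reward `R t` has conditional mean
  `θ (Sig t)`; in particular it is conditionally mean-independent of the action -/
  rew_mean : ∀ t,
    (μ[R t | (F t) ⊔ MeasurableSpace.comap (Sig t) ⊤]) =ᵐ[μ] fun ω => θ (Sig t ω)

namespace NSDSetup

variable {T K S D : ℕ} {Ω : Type} [MeasurableSpace Ω] {μ : Measure Ω}

/-- windowed action counts `N^W_t(a) = max{1, Σ_{u=(t−W)⁺}^{t−1} 1{A_u = a}}` -/
def NW (M : NSDSetup T K S D Ω μ) (W t : ℕ) (a : Fin K) (ω : Ω) : ℕ :=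
  max 1 (∑ u ∈ Finset.Ico (max 1 (t - W)) t, if M.A u ω = a then 1 else 0)

/-- windowed transition estimate `p̂_t(s|a)` -/
def phat (M : NSDSetup T K S D Ω μ) (W t : ℕ) (a : Fin K) (s : Fin S) (ω : Ω) : ℝ :=
  (∑ u ∈ Finset.Ico (max 1 (t - W)) t, if M.A u ω = a ∧ M.Sig u ω = s then (1 : ℝ) else 0)
    / (M.NW W t a ω)

/-- delayed signal counts `N^D_t(s) = max{1, Σ_{u < t−D} 1{S_u = s}}` -/
def ND (M : NSDSetup T K S D Ω μ) (t : ℕ) (s : Fin S) (ω : Ω) : ℕ :=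
  max 1 (∑ u ∈ Finset.Ico 1 (t - D), if M.Sig u ω = s then 1 else 0)

/-- delayed empirical reward estimate `θ̂_t(s)` -/
def thetahat (M : NSDSetup T K S D Ω μ) (t : ℕ) (s : Fin S) (ω : Ω) : ℝ :=
  (∑ u ∈ Finset.Ico 1 (t - D), if M.Sig u ω = s then M.R u ω else 0) / (M.ND t s ω)

/-- upper confidence value `U_t(s) = min{1, θ̂_t(s) + √(C_{T,δ}/N^D_t(s))}` -/
def Ubd (M : NSDSetup T K S D Ω μ) (δ : ℝ) (t : ℕ) (s : Fin S) (ω : Ω) : ℝ :=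
  min 1 (M.thetahat t s ω + Real.sqrt (CTdelta T S δ / M.ND t s ω))

/-- optimistic index
`ρ⁺_t(a) = max{ qᵀU_t : q ∈ Δ_S, ‖p̂_t(a) − q‖₁ ≤ √(C_{W,T,δ}/N^W_t(a)) }` -/
def rhoPlus (M : NSDSetup T K S D Ω μ) (W : ℕ) (δ : ℝ) (t : ℕ) (a : Fin K) (ω : Ω) : ℝ :=
  sSup {x : ℝ | ∃ q ∈ stdSimplex ℝ (Fin S),
    (∑ s, |M.phat W t a s ω - q s|) ≤ Real.sqrt (CWdelta K W T S δ / M.NW W t a ω) ∧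
    x = ∑ s, q s * M.Ubd δ t s ω}

/-- expected reward `ρ_t(a) = Σ_s p_t(s|a) θ_s` -/
def rho (M : NSDSetup T K S D Ω μ) (t : ℕ) (a : Fin K) : ℝ := ∑ s, M.p t a s * M.θ s

/-- optimal expected reward `ρ*_t = max_a ρ_t(a)` -/
def rhoStar (M : NSDSetup T K S D Ω μ) (t : ℕ) : ℝ :=
  haveI : Nonempty (Fin K) := Fin.pos_iff_nonempty.mp (by have := M.hK; omega)
  Finset.univ.sup' Finset.univ_nonempty (M.rho t)

/-- dynamic regret `R(T) = Σ_{t=1}^T (ρ*_t − ρ_t(A_t))` -/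
def Regret (M : NSDSetup T K S D Ω μ) (ω : Ω) : ℝ :=
  ∑ t ∈ Finset.Icc 1 T, (M.rhoStar t - M.rho t (M.A t ω))

/-- the number of rounds within the horizon at which the transition probabilities change -/
def numSwitches (M : NSDSetup T K S D Ω μ) : ℕ :=
  ((Finset.Icc 2 T).filter (fun t => M.p t ≠ M.p (t - 1))).card

/-- The trajectory is generated by the `NSD-UCRL2` algorithm with window size `W` and
confidence parameter `δ`: each action is pulled once during the first `K` rounds, and from
round `K+1` on the action maximizing the optimistic index `ρ⁺_t` is played. -/
def IsNSDUCRL2 (M : NSDSetup T K S D Ω μ) (W : ℕ) (δ : ℝ) : Prop :=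
  (∀ ω : Ω, ∀ a : Fin K, ∃ t ∈ Finset.Icc 1 K, M.A t ω = a) ∧
  ∀ ω : Ω, ∀ t ∈ Finset.Icc (K + 1) T, ∀ a : Fin K,
    M.rhoPlus W δ t a ω ≤ M.rhoPlus W δ t (M.A t ω) ω

end NSDSetup

/-- **Key step of the proof of Theorem 3.**  Fix a round `t` at which `NSD-UCRL2` acts
greedily.  Suppose that at round `t` (for the realization `ω`):
(i) `θ_s ≤ U_t(s)` for every signal `s`;
(ii) the maximizer `q = p̃_t(A_t)` of the optimistic index of the chosen action satisfies
`‖q − p_t(·|A_t)‖₁ ≤ 2√(C_{W,T,δ}/N^W_t(A_t))`, and the true transition vector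
`p_t(·|a*_t)` of the optimal action lies in the constraint set of `ρ⁺_t(a*_t)`;
(iii) the chosen action `A_t` is `ε`-bad; and
(iv) `|U_t(s) − θ_s| ≤ Δ` for every `s` with `p_t(s|A_t) > 0`.
Then `N^W_t(A_t) ≤ C_{W,T,δ}/(ε − Δ)²`. -/
theorem nsd_ucrl2_bad_action_count_key
    (T K S D W : ℕ) (Ω : Type) [MeasurableSpace Ω] (μ : Measure Ω)
    [IsProbabilityMeasure μ] (M : NSDSetup T K S D Ω μ) (δ ε Δ : ℝ)
    (t : ℕ) (ω : Ω) (aStar : Fin K) (q : Fin S → ℝ)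
    (hδ0 : 0 < δ) (hδ1 : δ < 1) (hW : 1 ≤ W)
    (hΔ0 : 0 < Δ) (hΔε : Δ < ε)
    (ht : t ∈ Finset.Icc (K + 1) T)
    (halg : M.IsNSDUCRL2 W δ)
    -- `aStar = a*_t` is the optimal action at round `t`
    (hopt : ∀ a : Fin K, M.rho t a ≤ M.rho t aStar)
    -- (i)
    (hU : ∀ s : Fin S, M.θ s ≤ M.Ubd δ t s ω)
    -- (ii): `q = p̃_t(A_t)` is the maximizer defining `ρ⁺_t(A_t)` …
    (hq_simplex : q ∈ stdSimplex ℝ (Fin S))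
    (hq_feas : (∑ s, |M.phat W t (M.A t ω) s ω - q s|) ≤
        Real.sqrt (CWdelta K W T S δ / M.NW W t (M.A t ω) ω))
    (hq_max : M.rhoPlus W δ t (M.A t ω) ω = ∑ s, q s * M.Ubd δ t s ω)
    -- … `‖p̃_t(A_t) − p_t(·|A_t)‖₁ ≤ 2√(C_{W,T,δ}/N^W_t(A_t))` …
    (hq_close : (∑ s, |q s - M.p t (M.A t ω) s|) ≤
        2 * Real.sqrt (CWdelta K W T S δ / M.NW W t (M.A t ω) ω))
    -- … and `p_t(·|a*_t)` lies in the constraint set of `ρ⁺_t(a*_t)`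
    (hstar_feas : (∑ s, |M.phat W t aStar s ω - M.p t aStar s|) ≤
        Real.sqrt (CWdelta K W T S δ / M.NW W t aStar ω))
    -- (iii): the chosen action is `ε`-bad at round `t`
    (hbad : ε ≤ M.rho t aStar - M.rho t (M.A t ω))
    -- (iv)
    (hUΔ : ∀ s : Fin S, 0 < M.p t (M.A t ω) s → |M.Ubd δ t s ω - M.θ s| ≤ Δ) :
    (M.NW W t (M.A t ω) ω : ℝ) ≤ CWdelta K W T S δ / (ε - Δ) ^ 2 := by
  classical
  set a := M.A t ω with ha
  have hNnat : 1 ≤ M.NW W t a ω := le_max_left _ _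
  have hNpos : (0:ℝ) < (M.NW W t a ω : ℝ) := by exact_mod_cast hNnat
  -- U values are in [0,1]
  have hU0 : ∀ s, 0 ≤ M.Ubd δ t s ω := by
    intro s
    have hth : 0 ≤ M.thetahat t s ω := by
      apply div_nonneg
      · refine Finset.sum_nonneg fun u _ => ?_
        split
        · exact (M.R_mem u ω).1
        · exact le_rfl
      · exact_mod_cast Nat.zero_le _
    exact le_min zero_le_one (add_nonneg hth (Real.sqrt_nonneg _))
  have hU1 : ∀ s, M.Ubd δ t s ω ≤ 1 := fun s => min_le_left _ _
  -- the constraint set of ρ⁺ is bounded above by 1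
  have hbdd : ∀ b : Fin K, BddAbove {x : ℝ | ∃ r ∈ stdSimplex ℝ (Fin S),
      (∑ s, |M.phat W t b s ω - r s|) ≤ Real.sqrt (CWdelta K W T S δ / M.NW W t b ω) ∧
      x = ∑ s, r s * M.Ubd δ t s ω} := by
    intro b
    refine ⟨1, ?_⟩
    rintro x ⟨r, hr, -, rfl⟩
    calc ∑ s, r s * M.Ubd δ t s ω ≤ ∑ s, r s * 1 :=
          Finset.sum_le_sum fun s _ => mul_le_mul_of_nonneg_left (hU1 s) (hr.1 s)
      _ = 1 := by simp [hr.2]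
  -- ρ(a*) ≤ ρ⁺(a*)
  have h1 : M.rho t aStar ≤ ∑ s, M.p t aStar s * M.Ubd δ t s ω :=
    Finset.sum_le_sum fun s _ => mul_le_mul_of_nonneg_left (hU s) ((M.p_mem t aStar).1 s)
  have h2 : (∑ s, M.p t aStar s * M.Ubd δ t s ω) ≤ M.rhoPlus W δ t aStar ω :=
    le_csSup (hbdd aStar) ⟨M.p t aStar, M.p_mem t aStar, hstar_feas, rfl⟩
  have h3 : M.rhoPlus W δ t aStar ω ≤ M.rhoPlus W δ t a ω := halg.2 ω t ht aStar
  -- bound Σ q U ≤ ρ(a) + Δ + √(C/N)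
  have hsum1 : ∑ s, M.p t a s = 1 := (M.p_mem t a).2
  have hcross : ∑ s, (q s - M.p t a s) * M.Ubd δ t s ω ≤
      (∑ s, |q s - M.p t a s|) / 2 := by
    have hterm : ∀ s ∈ Finset.univ, (q s - M.p t a s) * M.Ubd δ t s ω ≤
        (q s - M.p t a s) * (1/2) + |q s - M.p t a s| * (1/2) := by
      intro s _
      have h1 : (q s - M.p t a s) * M.Ubd δ t s ω =
          (q s - M.p t a s) * (1/2) + (q s - M.p t a s) * (M.Ubd δ t s ω - 1/2) := by ring
      have h2 : (q s - M.p t a s) * (M.Ubd δ t s ω - 1/2) ≤ |q s - M.p t a s| * (1/2) := by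
        calc (q s - M.p t a s) * (M.Ubd δ t s ω - 1/2)
            ≤ |(q s - M.p t a s) * (M.Ubd δ t s ω - 1/2)| := le_abs_self _
          _ = |q s - M.p t a s| * |M.Ubd δ t s ω - 1/2| := abs_mul _ _
          _ ≤ |q s - M.p t a s| * (1/2) := by
              refine mul_le_mul_of_nonneg_left ?_ (abs_nonneg _)
              exact abs_le.2 ⟨by linarith [hU0 s], by linarith [hU1 s]⟩
      linarith
    calc ∑ s, (q s - M.p t a s) * M.Ubd δ t s ω
        ≤ ∑ s, ((q s - M.p t a s) * (1/2) + |q s - M.p t a s| * (1/2)) :=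
          Finset.sum_le_sum hterm
      _ = (∑ s, (q s - M.p t a s)) * (1/2) + (∑ s, |q s - M.p t a s|) * (1/2) := by
          rw [Finset.sum_add_distrib, Finset.sum_mul, Finset.sum_mul]
      _ = (∑ s, |q s - M.p t a s|) / 2 := by
          have : ∑ s, (q s - M.p t a s) = 0 := by
            rw [Finset.sum_sub_distrib, hq_simplex.2, hsum1]; ring
          rw [this]; ring
  have hmain : ∑ s, q s * M.Ubd δ t s ω ≤
      M.rho t a + Δ + Real.sqrt (CWdelta K W T S δ / M.NW W t a ω) := by
    have hsplit : ∑ s, q s * M.Ubd δ t s ω =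
        (∑ s, M.p t a s * M.Ubd δ t s ω) + ∑ s, (q s - M.p t a s) * M.Ubd δ t s ω := by
      rw [← Finset.sum_add_distrib]; congr 1; ext s; ring
    have hpart : ∑ s, M.p t a s * M.Ubd δ t s ω ≤ M.rho t a + Δ := by
      have : ∀ s ∈ Finset.univ, M.p t a s * M.Ubd δ t s ω ≤
          M.p t a s * M.θ s + M.p t a s * Δ := by
        intro s _
        rcases eq_or_lt_of_le ((M.p_mem t a).1 s) with h | h
        · simp [← h]
        · have := hUΔ s h
          have hUb : M.Ubd δ t s ω ≤ M.θ s + Δ := by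
            have := abs_le.1 this
            linarith [this.2]
          nlinarith
      calc ∑ s, M.p t a s * M.Ubd δ t s ω
          ≤ ∑ s, (M.p t a s * M.θ s + M.p t a s * Δ) := Finset.sum_le_sum this
        _ = M.rho t a + (∑ s, M.p t a s) * Δ := by
            rw [Finset.sum_add_distrib, Finset.sum_mul]; rfl
        _ = M.rho t a + Δ := by rw [hsum1, one_mul]
    have hclose2 : (∑ s, |q s - M.p t a s|) / 2 ≤
        Real.sqrt (CWdelta K W T S δ / M.NW W t a ω) := by linarith
    linarith
  -- combine: ε − Δ ≤ √(C/N)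
  have hεΔ : ε - Δ ≤ Real.sqrt (CWdelta K W T S δ / M.NW W t a ω) := by
    have hρ : M.rho t aStar ≤ M.rho t a + Δ +
        Real.sqrt (CWdelta K W T S δ / M.NW W t a ω) := by
      calc M.rho t aStar ≤ M.rhoPlus W δ t a ω := le_trans h1 (le_trans h2 h3)
        _ = ∑ s, q s * M.Ubd δ t s ω := hq_max
        _ ≤ _ := hmain
    linarith
  have hεΔpos : (0:ℝ) < ε - Δ := sub_pos.2 hΔε
  have hCN : 0 ≤ CWdelta K W T S δ / M.NW W t a ω := by
    by_contra h
    push_neg at h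
    rw [Real.sqrt_eq_zero'.2 (le_of_lt h)] at hεΔ
    linarith
  have hsq : (ε - Δ) ^ 2 ≤ CWdelta K W T S δ / M.NW W t a ω := by
    have := pow_le_pow_left₀ (le_of_lt hεΔpos) hεΔ 2
    rwa [Real.sq_sqrt hCN] at this
  rw [le_div_iff₀ hNpos] at hsq
  rw [le_div_iff₀ (by positivity : (0:ℝ) < (ε - Δ) ^ 2)]
  linarith
end
end
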